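/- Let E be a real inner product space and n ∈ E a unit vector. For x ∈ E, write x_n = ⟪x, n⟫ (normal component) and x_τ = x − ⟪x, n⟫ • n (tangential part). Let g ≥ 0 and λ ∈ E. Then the following are equivalent: (i) λ_n ≥ 0 and ‖λ_τ‖ ≤ g; (ii) for every v ∈ E with v_n ≤ 0 one has ⟪λ, v⟫ ≤ g‖v_τ‖. -/

import Mathlib

open scoped RealInnerProductSpace

/-- Pointwise characterization of the Tresca dual cone: `λ` has nonnegative
normal component and tangential part bounded by `g` if and only if
`⟪λ, v⟫ ≤ g‖v_τ‖` for every `v` with nonpositive normal component. -/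
theorem tresca_dual_cone_characterization
    {E : Type*} [NormedAddCommGroup E] [InnerProductSpace ℝ E]
    (n : E) (hn : ‖n‖ = 1) (g : ℝ) (hg : 0 ≤ g) (lam : E) :
    (0 ≤ ⟪lam, n⟫ ∧ ‖lam - ⟪lam, n⟫ • n‖ ≤ g) ↔
      (∀ v : E, ⟪v, n⟫ ≤ 0 → ⟪lam, v⟫ ≤ g * ‖v - ⟪v, n⟫ • n‖) := by
  have hnn : ⟪n, n⟫ = 1 := by
    have := real_inner_self_eq_norm_sq n
    rw [hn] at this; simpa using this
  constructor
  · rintro ⟨h1, h2⟩ v hv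
    have key : ⟪lam, v⟫ =
        ⟪lam, n⟫ * ⟪v, n⟫ + ⟪lam - ⟪lam, n⟫ • n, v - ⟪v, n⟫ • n⟫ := by
      simp [inner_sub_left, inner_sub_right, inner_smul_left, inner_smul_right,
        real_inner_comm v n, hnn, hn]
    rw [key]
    have h3 : ⟪lam - ⟪lam, n⟫ • n, v - ⟪v, n⟫ • n⟫ ≤ g * ‖v - ⟪v, n⟫ • n‖ := by
      calc ⟪lam - ⟪lam, n⟫ • n, v - ⟪v, n⟫ • n⟫
          ≤ ‖lam - ⟪lam, n⟫ • n‖ * ‖v - ⟪v, n⟫ • n‖ := real_inner_le_norm _ _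
        _ ≤ g * ‖v - ⟪v, n⟫ • n‖ := by
            exact mul_le_mul_of_nonneg_right h2 (norm_nonneg _)
    nlinarith [mul_nonpos_of_nonneg_of_nonpos h1 hv]
  · intro h
    constructor
    · have := h (-n) (by simp [hnn])
      simp [inner_neg_right, hnn, hn] at this
      linarith
    · set t := lam - ⟪lam, n⟫ • n with ht
      have htn : ⟪t, n⟫ = 0 := by
        simp [ht, inner_sub_left, inner_smul_left, hnn, hn]
      have := h t (le_of_eq htn)
      rw [htn] at this
      simp only [zero_smul, sub_zero] at this
      have hlt : ⟪lam, t⟫ = ‖t‖ ^ 2 := by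
        have h1 : ⟪t, t⟫ = ⟪lam, t⟫ - ⟪lam, n⟫ * ⟪n, t⟫ := by
          rw [ht, inner_sub_left, real_inner_smul_left]
        have hnt : ⟪n, t⟫ = 0 := by rw [real_inner_comm]; exact htn
        rw [hnt, mul_zero, sub_zero] at h1
        have h2 := real_inner_self_eq_norm_sq t
        linarith
      rw [hlt] at this
      rcases eq_or_lt_of_le (norm_nonneg t) with h0 | h0
      · rw [← h0]; exact hg
      · nlinarith
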